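/- Let μ > 0, s ≥ 0, d ≥ 1, and let u, u' ∈ ℝ^d satisfy ‖u − u'‖_∞ ≤ s. Then for all integers 1 ≤ j ≤ i ≤ d: smax^{≤i}_μ(u) − smax^{≤j}_μ(u) ≥ e^{−2s/μ}·(smax^{≤i}_μ(u') − smax^{≤j}_μ(u')). -/

import Mathlib

open Finset

/-- The partial softmax `smax^{≤n}_μ(x) = μ·ln(Σ_{i=1}^n exp(x_i/μ))` (over the first
`n` coordinates). -/
noncomputable def psmax {d : ℕ} (μ : ℝ) (n : ℕ) (x : Fin d → ℝ) : ℝ :=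
  μ * Real.log (∑ i ∈ univ.filter (fun i : Fin d => (i : ℕ) < n), Real.exp (x i / μ))

/-- If `‖u − u'‖_∞ ≤ s` then for all `1 ≤ j ≤ i ≤ d`:
`smax^{≤i}_μ(u) − smax^{≤j}_μ(u) ≥ e^{−2s/μ}·(smax^{≤i}_μ(u') − smax^{≤j}_μ(u'))`. -/
theorem stmt15 {d : ℕ} (hd : 1 ≤ d) (μ s : ℝ) (hμ : 0 < μ) (hs : 0 ≤ s)
    (u u' : Fin d → ℝ) (h : ∀ i, |u i - u' i| ≤ s) :
    ∀ i j : ℕ, 1 ≤ j → j ≤ i → i ≤ d →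
      psmax μ i u - psmax μ j u ≥
        Real.exp (-(2 * s) / μ) * (psmax μ i u' - psmax μ j u') := by
  intro i j hj hji hid
  set c := Real.exp (-(2 * s) / μ) with hc
  have hc0 : 0 < c := Real.exp_pos _
  have hc1 : c ≤ 1 := by
    rw [hc, show (1:ℝ) = Real.exp 0 from Real.exp_zero.symm]
    exact Real.exp_le_exp.mpr (div_nonpos_of_nonpos_of_nonneg (by nlinarith) hμ.le)
  set Si := univ.filter (fun k : Fin d => (k : ℕ) < i) with hSi
  set Sj := univ.filter (fun k : Fin d => (k : ℕ) < j) with hSj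
  have hsub : Sj ⊆ Si := by
    intro k hk
    simp only [hSi, hSj, mem_filter, mem_univ, true_and] at *
    omega
  set A := ∑ k ∈ Sj, Real.exp (u k / μ) with hA
  set B := ∑ k ∈ Si, Real.exp (u k / μ) with hB
  set A' := ∑ k ∈ Sj, Real.exp (u' k / μ) with hA'
  set B' := ∑ k ∈ Si, Real.exp (u' k / μ) with hB'
  have hne : Sj.Nonempty := ⟨⟨0, by omega⟩, by simp [hSj]; omega⟩
  have hApos : 0 < A := Finset.sum_pos (fun k _ => Real.exp_pos _) hne
  have hA'pos : 0 < A' := Finset.sum_pos (fun k _ => Real.exp_pos _) hne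
  have hBpos : 0 < B := Finset.sum_pos (fun k _ => Real.exp_pos _) (hne.mono hsub)
  have hB'pos : 0 < B' := Finset.sum_pos (fun k _ => Real.exp_pos _) (hne.mono hsub)
  have hAB' : A' ≤ B' := Finset.sum_le_sum_of_subset_of_nonneg hsub
    (fun k _ _ => (Real.exp_pos _).le)
  -- difference bound
  have hdiff : Real.exp (-s / μ) * (B' - A') ≤ B - A := by
    have h1 : B - A = ∑ k ∈ Si \ Sj, Real.exp (u k / μ) := by
      rw [hB, hA, ← Finset.sum_sdiff hsub]; ring
    have h2 : B' - A' = ∑ k ∈ Si \ Sj, Real.exp (u' k / μ) := by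
      rw [hB', hA', ← Finset.sum_sdiff hsub]; ring
    rw [h1, h2, Finset.mul_sum]
    refine Finset.sum_le_sum fun k _ => ?_
    rw [← Real.exp_add]
    apply Real.exp_le_exp.mpr
    rw [← add_div]
    have := (abs_le.mp (h k)).1
    gcongr
    linarith
  -- A bound
  have hAbd : A ≤ Real.exp (s / μ) * A' := by
    rw [Finset.mul_sum]
    refine Finset.sum_le_sum fun k _ => ?_
    rw [← Real.exp_add]
    apply Real.exp_le_exp.mpr
    rw [← add_div]
    have := (abs_le.mp (h k)).2
    gcongr
    linarith
  have hE : c * Real.exp (s / μ) = Real.exp (-s / μ) := by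
    rw [hc, ← Real.exp_add, ← add_div]
    congr 1
    ring
  -- key ratio inequality
  have key : (A' + c * (B' - A')) * A ≤ B * A' := by
    have t1 : c * (B' - A') * A ≤ c * (B' - A') * (Real.exp (s / μ) * A') :=
      mul_le_mul_of_nonneg_left hAbd (mul_nonneg hc0.le (sub_nonneg.mpr hAB'))
    have t2 : c * (B' - A') * (Real.exp (s / μ) * A') = Real.exp (-s / μ) * (B' - A') * A' := by
      rw [← hE]; ring
    have t3 : Real.exp (-s / μ) * (B' - A') * A' ≤ (B - A) * A' :=
      mul_le_mul_of_nonneg_right hdiff hA'pos.le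
    nlinarith [t1, t2, t3]
  have hratio : 1 + c * (B' / A' - 1) ≤ B / A := by
    have : (A' + c * (B' - A')) / A' ≤ B / A := by
      rw [div_le_div_iff₀ hA'pos hApos]
      exact key
    calc 1 + c * (B' / A' - 1) = (A' + c * (B' - A')) / A' := by
          field_simp
      _ ≤ B / A := this
  have hR'1 : 1 ≤ B' / A' := (one_le_div hA'pos).mpr hAB'
  -- concavity of log
  have hlog1 : c * Real.log (B' / A') ≤ Real.log (1 + c * (B' / A' - 1)) := by
    have := strictConcaveOn_log_Ioi.concaveOn.2 (Set.mem_Ioi.mpr one_pos)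
      (Set.mem_Ioi.mpr (div_pos hB'pos hA'pos)) (sub_nonneg.mpr hc1) hc0.le
      (by ring : (1 - c) + c = 1)
    simp only [smul_eq_mul, Real.log_one, mul_zero, zero_add, mul_one] at this
    calc c * Real.log (B' / A') ≤ Real.log ((1 - c) * 1 + c * (B' / A')) := by
          simpa using this
      _ = Real.log (1 + c * (B' / A' - 1)) := by ring_nf
  have hlog2 : Real.log (1 + c * (B' / A' - 1)) ≤ Real.log (B / A) :=
    Real.log_le_log (by nlinarith) hratio
  have hfin : c * (Real.log B' - Real.log A') ≤ Real.log B - Real.log A := by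
    have e1 : Real.log (B / A) = Real.log B - Real.log A :=
      Real.log_div hBpos.ne' hApos.ne'
    have e2 : Real.log (B' / A') = Real.log B' - Real.log A' :=
      Real.log_div hB'pos.ne' hA'pos.ne'
    rw [← e1, ← e2]
    linarith
  show μ * Real.log B - μ * Real.log A ≥ c * (μ * Real.log B' - μ * Real.log A')
  nlinarith [mul_le_mul_of_nonneg_left hfin hμ.le]
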